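/- Let n be even. The number of partial permutations α of the chain {1,...,n} that are orientation-preserving, have domain of size n-1, and whose completion is an even permutation, equals n²(n-1)/2. -/

import Mathlib

/-- α is orientation-preserving: among the cyclically adjacent pairs of elements of the
domain of α there is at most one descent. -/
def IsOrientationPreserving {n : ℕ} (α : Fin n → Option (Fin n)) : Prop :=
  Nat.card {p : Fin n × Fin n //
    (α p.1).isSome ∧ (α p.2).isSome ∧
    ((p.1 < p.2 ∧ ∀ c : Fin n, (α c).isSome → (c ≤ p.1 ∨ p.2 ≤ c)) ∨
     (p.2 ≤ p.1 ∧ ∀ c : Fin n, (α c).isSome → (p.2 ≤ c ∧ c ≤ p.1))) ∧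
    ∃ x y : Fin n, α p.1 = some x ∧ α p.2 = some y ∧ y < x} ≤ 1

open Equiv Equiv.Perm

namespace OPAux

lemma natCard_le_one (X : Type*) [Subsingleton X] : Nat.card X ≤ 1 := by
  rcases isEmpty_or_nonempty X with h | h
  · simp
  · haveI : Unique X := uniqueOfSubsingleton h.some
    simp [Nat.card_unique]

lemma one_lt_natCard_of_ne {X : Type*} [Finite X] {x y : X} (h : x ≠ y) : 1 < Nat.card X := by
  haveI := Fintype.ofFinite X
  rw [Nat.card_eq_fintype_card]
  exact Fintype.one_lt_card_iff_nontrivial.mpr ⟨⟨x, y, h⟩⟩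

lemma fin_add_cases {m : ℕ} (i k : Fin m) :
    ((i + k : Fin m).val = i.val + k.val ∧ i.val + k.val < m)
      ∨ ((i + k : Fin m).val + m = i.val + k.val) := by
  have h := Fin.val_add i k
  have hi := i.isLt
  have hk := k.isLt
  rcases lt_or_ge (i.val + k.val) m with h1 | h1
  · left; rw [h, Nat.mod_eq_of_lt h1]; exact ⟨rfl, h1⟩
  · right; rw [h, Nat.mod_eq_sub_mod h1, Nat.mod_eq_of_lt (by omega)]; omega

/-- The partial map determined by missing point `a`, missing value `b`, rotation `k`. -/
def Emap {m : ℕ} (a b : Fin (m+1)) (k : Fin m) : Fin (m+1) → Option (Fin (m+1)) :=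
  fun c => (finSuccEquiv' a c).map (fun i => b.succAbove (i + k))

@[simp] lemma Emap_at {m : ℕ} (a b : Fin (m+1)) (k : Fin m) : Emap a b k a = none := by
  simp [Emap, finSuccEquiv'_at]

@[simp] lemma Emap_succAbove {m : ℕ} (a b : Fin (m+1)) (k : Fin m) (i : Fin m) :
    Emap a b k (a.succAbove i) = some (b.succAbove (i + k)) := by
  simp [Emap, finSuccEquiv'_succAbove]

/-- The completion permutation. -/
def Pmap {m : ℕ} [NeZero m] (a b : Fin (m+1)) (k : Fin m) : Equiv.Perm (Fin (m+1)) :=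
  ((finSuccEquiv' a).trans ((Equiv.addRight k).optionCongr)).trans (finSuccEquiv' b).symm

@[simp] lemma Pmap_at {m : ℕ} [NeZero m] (a b : Fin (m+1)) (k : Fin m) : Pmap a b k a = b := by
  simp [Pmap, finSuccEquiv'_at, finSuccEquiv'_symm_none]

@[simp] lemma Pmap_succAbove {m : ℕ} [NeZero m] (a b : Fin (m+1)) (k : Fin m) (i : Fin m) :
    Pmap a b k (a.succAbove i) = b.succAbove (i + k) := by
  simp [Pmap, finSuccEquiv'_succAbove, finSuccEquiv'_symm_some]

lemma trans_eq_cycleRange {m : ℕ} (a : Fin (m+1)) :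
    ((finSuccEquiv' a).trans (finSuccEquiv' (0 : Fin (m+1))).symm : Equiv.Perm (Fin (m+1)))
      = a.cycleRange := by
  ext c
  rcases eq_or_ne c a with rfl | h
  · simp [finSuccEquiv'_at, finSuccEquiv'_symm_none]
  · obtain ⟨i, rfl⟩ := Fin.exists_succAbove_eq h
    simp [finSuccEquiv'_succAbove, finSuccEquiv'_symm_some, Fin.zero_succAbove,
      Fin.cycleRange_succAbove]

lemma sign_trans_finSuccEquiv' {m : ℕ} (a b : Fin (m+1)) :
    Equiv.Perm.sign ((finSuccEquiv' a).trans (finSuccEquiv' b).symm : Equiv.Perm (Fin (m+1)))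
      = (-1) ^ (a.val + b.val) := by
  have hdec : ((finSuccEquiv' a).trans (finSuccEquiv' b).symm : Equiv.Perm (Fin (m+1)))
      = ((finSuccEquiv' a).trans (finSuccEquiv' (0 : Fin (m+1))).symm).trans
        ((finSuccEquiv' (0 : Fin (m+1))).trans (finSuccEquiv' b).symm) := by
    ext c
    simp [Equiv.trans_apply]
  have h2 : ((finSuccEquiv' (0 : Fin (m+1))).trans (finSuccEquiv' b).symm : Equiv.Perm (Fin (m+1)))
      = (b.cycleRange)⁻¹ := by
    calc ((finSuccEquiv' (0 : Fin (m+1))).trans (finSuccEquiv' b).symm : Equiv.Perm (Fin (m+1)))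
        = ((finSuccEquiv' b).trans (finSuccEquiv' (0 : Fin (m+1))).symm).symm := by
          ext c; simp [Equiv.trans_apply]
      _ = (b.cycleRange)⁻¹ := by rw [trans_eq_cycleRange b]; rfl
  rw [hdec, trans_eq_cycleRange, h2]
  have hmul : (Fin.cycleRange a).trans (Fin.cycleRange b)⁻¹
      = (Fin.cycleRange b)⁻¹ * Fin.cycleRange a := rfl
  rw [hmul, map_mul, map_inv, Fin.sign_cycleRange, Fin.sign_cycleRange, ← inv_pow]
  have hne : ((-1 : ℤˣ))⁻¹ = -1 := rfl
  rw [hne, pow_add, mul_comm]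

open Fin.CommRing in
lemma sign_addRight_of_odd {m : ℕ} [NeZero m] (hm : Odd m) (k : Fin m) :
    Equiv.Perm.sign (Equiv.addRight k : Equiv.Perm (Fin m)) = 1 := by
  obtain ⟨t, rfl⟩ := hm
  have hpow : ∀ j : ℕ, ∀ x : Fin (2*t+1), ((finRotate (2*t+1)) ^ j) x = x + (j : Fin (2*t+1)) := by
    intro j
    induction j with
    | zero => intro x; simp
    | succ j ih =>
      intro x
      rw [pow_succ, Equiv.Perm.mul_apply, finRotate_succ_apply, ih]
      push_cast
      ring
  have heq : (Equiv.addRight k : Equiv.Perm (Fin (2*t+1))) = (finRotate (2*t+1)) ^ (k.val) := by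
    ext x
    rw [hpow k.val x]
    simp [Fin.cast_val_eq_self]
  rw [heq, map_pow, sign_finRotate]
  have h2 : Even (2*t) := ⟨t, by omega⟩
  rw [Nat.add_sub_cancel, h2.neg_one_pow, one_pow]

lemma sign_Pmap {m : ℕ} [NeZero m] (hm : Odd m) (a b : Fin (m+1)) (k : Fin m) :
    Equiv.Perm.sign (Pmap a b k) = (-1) ^ (a.val + b.val) := by
  have hdec : Pmap a b k
      = ((finSuccEquiv' a).trans (finSuccEquiv' b).symm).trans
        (((finSuccEquiv' b).trans ((Equiv.addRight k).optionCongr)).trans (finSuccEquiv' b).symm) := by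
    ext c
    simp [Pmap, Equiv.trans_apply]
  have hconj : Equiv.Perm.sign
      ((((finSuccEquiv' b).trans ((Equiv.addRight k).optionCongr)).trans (finSuccEquiv' b).symm) :
        Equiv.Perm (Fin (m+1))) = 1 := by
    have h := Equiv.Perm.sign_symm_trans_trans ((Equiv.addRight k).optionCongr)
      ((finSuccEquiv' b).symm : Option (Fin m) ≃ Fin (m+1))
    simp only [Equiv.symm_symm] at h
    rw [h, Equiv.optionCongr_sign, sign_addRight_of_odd hm]
  have hmul : Pmap a b k
      = ((((finSuccEquiv' b).trans ((Equiv.addRight k).optionCongr)).trans (finSuccEquiv' b).symm) :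
        Equiv.Perm (Fin (m+1))) * ((finSuccEquiv' a).trans (finSuccEquiv' b).symm) := by
    rw [hdec]; rfl
  rw [hmul, map_mul, hconj, sign_trans_finSuccEquiv', one_mul]

section Stage2
variable {m : ℕ}

lemma fin_add_val (i k : Fin m) :
    ∃ s : ℕ, (i + k : Fin m).val = s ∧
      ((s = i.val + k.val ∧ i.val + k.val < m) ∨ (s + m = i.val + k.val)) :=
  ⟨(i + k : Fin m).val, rfl, fin_add_cases i k⟩

lemma fin_succ_val [NeZero m] (i : Fin m) :
    ∃ s : ℕ, ((i + 1 : Fin m).val = s) ∧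
      ((s = i.val + 1 ∧ i.val + 1 < m) ∨ (i.val + 1 = m ∧ s = 0)) := by
  refine ⟨(i + 1 : Fin m).val, rfl, ?_⟩
  obtain ⟨s, hs, h⟩ := fin_add_val i (1 : Fin m)
  rw [hs]
  have h1 : (1 : Fin m).val = 1 % m := Fin.val_one' m
  have hm := Nat.pos_of_ne_zero (NeZero.ne m)
  have hi := i.isLt
  rcases Nat.lt_or_ge m 2 with h2 | h2
  · have hm1 : m = 1 := by omega
    subst hm1
    have h1' : (1 : Fin 1).val = 0 := rfl
    rw [h1'] at h
    omega
  · rw [Nat.mod_eq_of_lt h2] at h1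
    rw [h1] at h
    omega

lemma isSome_Emap_iff (a b : Fin (m+1)) (k : Fin m) (c : Fin (m+1)) :
    (Emap a b k c).isSome ↔ c ≠ a := by
  constructor
  · rintro h rfl; simp at h
  · intro h
    obtain ⟨i, rfl⟩ := Fin.exists_succAbove_eq h
    simp

lemma shape_Emap (a b : Fin (m+1)) (k : Fin m) (p1 p2 : Fin (m+1))
    (h1 : (Emap a b k p1).isSome) (h2 : (Emap a b k p2).isSome)
    (hadj : (p1 < p2 ∧ ∀ c, (Emap a b k c).isSome → (c ≤ p1 ∨ p2 ≤ c)) ∨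
            (p2 ≤ p1 ∧ ∀ c, (Emap a b k c).isSome → (p2 ≤ c ∧ c ≤ p1)))
    (hdesc : ∃ x y, Emap a b k p1 = some x ∧ Emap a b k p2 = some y ∧ y < x) :
    ∃ i j : Fin m, p1 = a.succAbove i ∧ p2 = a.succAbove j ∧
      ((1 ≤ k.val ∧ i.val + k.val + 1 = m ∧ j.val + k.val = m) ∨
       (k.val = 0 ∧ i.val + 1 = m ∧ j.val = 0)) := by
  rw [isSome_Emap_iff] at h1 h2
  obtain ⟨i, rfl⟩ := Fin.exists_succAbove_eq h1
  obtain ⟨j, rfl⟩ := Fin.exists_succAbove_eq h2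
  refine ⟨i, j, rfl, rfl, ?_⟩
  obtain ⟨x, y, hx, hy, hyx⟩ := hdesc
  rw [Emap_succAbove] at hx hy
  have hxv := Option.some.inj hx
  have hyv := Option.some.inj hy
  subst hxv hyv
  rw [Fin.succAbove_lt_succAbove_iff] at hyx
  have hlt' : (j + k).val < (i + k).val := hyx
  obtain ⟨sik, hsik, A⟩ := fin_add_val i k
  obtain ⟨sjk, hsjk, B⟩ := fin_add_val j k
  rw [hsik, hsjk] at hlt'
  have hi := i.isLt
  have hj := j.isLt
  have hk := k.isLt
  rcases hadj with ⟨hlt12, hbet⟩ | ⟨hle, hbet⟩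
  · -- consecutive interior pair
    rw [Fin.succAbove_lt_succAbove_iff] at hlt12
    have hij : i.val < j.val := hlt12
    have hj1 : j.val = i.val + 1 := by
      by_contra hne
      have hb := hbet (a.succAbove ⟨i.val+1, by omega⟩)
        (by rw [isSome_Emap_iff]; exact Fin.succAbove_ne a _)
      rcases hb with hb | hb <;>
        · rw [Fin.succAbove_le_succAbove_iff, Fin.le_def] at hb
          simp only [] at hb
          omega
    left; omega
  · -- the wrap-around pair
    have hm1 : 0 < m := by omega
    have hb0 := (hbet (a.succAbove ⟨0, hm1⟩)
      (by rw [isSome_Emap_iff]; exact Fin.succAbove_ne a _)).1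
    have hbm := (hbet (a.succAbove ⟨m-1, by omega⟩)
      (by rw [isSome_Emap_iff]; exact Fin.succAbove_ne a _)).2
    rw [Fin.succAbove_le_succAbove_iff, Fin.le_def] at hb0 hbm
    simp only [] at hb0 hbm
    right
    omega

lemma isOrientationPreserving_Emap (a b : Fin (m+1)) (k : Fin m) :
    IsOrientationPreserving (Emap a b k) := by
  rw [IsOrientationPreserving]
  have hsub : Subsingleton {p : Fin (m+1) × Fin (m+1) //
      (Emap a b k p.1).isSome ∧ (Emap a b k p.2).isSome ∧
      ((p.1 < p.2 ∧ ∀ c : Fin (m+1), (Emap a b k c).isSome → (c ≤ p.1 ∨ p.2 ≤ c)) ∨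
       (p.2 ≤ p.1 ∧ ∀ c : Fin (m+1), (Emap a b k c).isSome → (p.2 ≤ c ∧ c ≤ p.1))) ∧
      ∃ x y : Fin (m+1), Emap a b k p.1 = some x ∧ Emap a b k p.2 = some y ∧ y < x} := by
    constructor
    rintro ⟨⟨p1, p2⟩, hp1, hp2, hpadj, hpdesc⟩ ⟨⟨q1, q2⟩, hq1, hq2, hqadj, hqdesc⟩
    obtain ⟨i, j, rfl, rfl, hp⟩ := shape_Emap a b k p1 p2 hp1 hp2 hpadj hpdesc
    obtain ⟨i', j', rfl, rfl, hq⟩ := shape_Emap a b k q1 q2 hq1 hq2 hqadj hqdesc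
    have hii : i = i' := by apply Fin.ext; omega
    have hjj : j = j' := by apply Fin.ext; omega
    subst hii hjj
    rfl
  exact natCard_le_one _
end Stage2

section Stage3
variable {m : ℕ}

/-- If `α` is orientation preserving with domain the complement of `a` and values
`b.succAbove (v i)` at `a.succAbove i`, then `v` has at most one cyclic descent. -/
lemma descent_unique [NeZero m] (α : Fin (m+1) → Option (Fin (m+1)))
    (hOP : IsOrientationPreserving α) (a b : Fin (m+1)) (v : Fin m → Fin m)
    (hdom : ∀ c, (α c).isSome ↔ c ≠ a)
    (hval : ∀ i, α (a.succAbove i) = some (b.succAbove (v i))) :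
    ∀ i1 i2 : Fin m, v (i1+1) < v i1 → v (i2+1) < v i2 → i1 = i2 := by
  rw [IsOrientationPreserving] at hOP
  have hmem : ∀ i : Fin m, v (i+1) < v i →
      ((α (a.succAbove i, a.succAbove (i+1)).1).isSome ∧
       (α (a.succAbove i, a.succAbove (i+1)).2).isSome ∧
       (((a.succAbove i, a.succAbove (i+1)).1 < (a.succAbove i, a.succAbove (i+1)).2 ∧
          ∀ c : Fin (m+1), (α c).isSome →
            (c ≤ (a.succAbove i, a.succAbove (i+1)).1 ∨ (a.succAbove i, a.succAbove (i+1)).2 ≤ c)) ∨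
        ((a.succAbove i, a.succAbove (i+1)).2 ≤ (a.succAbove i, a.succAbove (i+1)).1 ∧
          ∀ c : Fin (m+1), (α c).isSome →
            ((a.succAbove i, a.succAbove (i+1)).2 ≤ c ∧ c ≤ (a.succAbove i, a.succAbove (i+1)).1))) ∧
       ∃ x y : Fin (m+1), α (a.succAbove i, a.succAbove (i+1)).1 = some x ∧
          α (a.succAbove i, a.succAbove (i+1)).2 = some y ∧ y < x) := by
    intro i hdesc
    refine ⟨by rw [hdom]; exact Fin.succAbove_ne a _, by rw [hdom]; exact Fin.succAbove_ne a _,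
      ?_, b.succAbove (v i), b.succAbove (v (i+1)), hval i, hval (i+1),
      Fin.succAbove_lt_succAbove_iff.mpr hdesc⟩
    obtain ⟨s, hs, hcase⟩ := fin_succ_val i
    rcases hcase with ⟨hs1, hs2⟩ | ⟨hs1, hs2⟩
    · -- interior pair
      left
      constructor
      · rw [Fin.succAbove_lt_succAbove_iff, Fin.lt_def, hs, hs1]; omega
      · intro c hc
        obtain ⟨t, rfl⟩ := Fin.exists_succAbove_eq ((hdom c).mp hc)
        rw [Fin.succAbove_le_succAbove_iff, Fin.succAbove_le_succAbove_iff,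
          Fin.le_def, Fin.le_def, hs, hs1]
        omega
    · -- wrap pair
      right
      constructor
      · rw [Fin.succAbove_le_succAbove_iff, Fin.le_def, hs, hs2]; omega
      · intro c hc
        obtain ⟨t, rfl⟩ := Fin.exists_succAbove_eq ((hdom c).mp hc)
        rw [Fin.succAbove_le_succAbove_iff, Fin.succAbove_le_succAbove_iff,
          Fin.le_def, Fin.le_def, hs, hs2]
        have h1 := t.isLt
        have h2 := i.isLt
        omega
  intro i1 i2 hd1 hd2
  by_contra hne
  have hne' : ((a.succAbove i1, a.succAbove (i1+1)) : Fin (m+1) × Fin (m+1)) ≠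
      (a.succAbove i2, a.succAbove (i2+1)) := by
    intro hcon
    exact hne (Fin.succAbove_right_injective (congrArg Prod.fst hcon))
  have h2 := one_lt_natCard_of_ne
    (X := {p : Fin (m+1) × Fin (m+1) //
      (α p.1).isSome ∧ (α p.2).isSome ∧
      ((p.1 < p.2 ∧ ∀ c : Fin (m+1), (α c).isSome → (c ≤ p.1 ∨ p.2 ≤ c)) ∨
       (p.2 ≤ p.1 ∧ ∀ c : Fin (m+1), (α c).isSome → (p.2 ≤ c ∧ c ≤ p.1))) ∧
      ∃ x y : Fin (m+1), α p.1 = some x ∧ α p.2 = some y ∧ y < x})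
    (x := ⟨_, hmem i1 hd1⟩) (y := ⟨_, hmem i2 hd2⟩)
    (by simpa [Subtype.ext_iff] using hne')
  omega

open Fin.CommRing in
/-- An injective map of `Fin m` with at most one cyclic descent is a rotation. -/
lemma eq_add_of_descents [NeZero m] (v : Fin m → Fin m) (hinj : Function.Injective v)
    (huniq : ∀ i1 i2 : Fin m, v (i1+1) < v i1 → v (i2+1) < v i2 → i1 = i2) :
    ∃ k : Fin m, ∀ i, v i = i + k := by
  have hm := Nat.pos_of_ne_zero (NeZero.ne m)
  rcases Nat.lt_or_ge m 2 with hm2 | hm2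
  · have hm1 : m = 1 := by omega
    subst hm1
    exact ⟨0, fun i => Subsingleton.elim _ _⟩
  obtain ⟨j, hj⟩ := (Finite.injective_iff_surjective.mp hinj) ⟨m-1, by omega⟩
  have hsucc_ne : ∀ s : Fin m, s + 1 ≠ s := by
    intro s hcon
    obtain ⟨t, ht, hc⟩ := fin_succ_val s
    rw [hcon] at ht
    omega
  have hdj : v (j+1) < v j := by
    have h1 : v (j+1) ≠ v j := fun hc => hsucc_ne j (hinj hc)
    have h1' : (v (j+1)).val ≠ (v j).val := fun hc => h1 (Fin.ext hc)
    have h2 : (v j).val = m - 1 := by rw [hj]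
    have h3 := (v (j+1)).isLt
    rw [Fin.lt_def]; omega
  have hasc : ∀ s : Fin m, s ≠ j → v s < v (s + 1) := by
    intro s hs
    have h1 : ¬ (v (s+1) < v s) := fun hc => hs (huniq s j hc hdj)
    have h2 : v (s+1) ≠ v s := fun hc => hsucc_ne s (hinj hc)
    omega
  obtain ⟨m', rfl⟩ : ∃ m', m = m' + 1 := ⟨m - 1, by omega⟩
  have hmono : StrictMono (fun t : Fin (m'+1) => v (j + 1 + t)) := by
    rw [Fin.strictMono_iff_lt_succ]
    intro t
    have hcs : (t.succ : Fin (m'+1)) = t.castSucc + 1 := by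
      apply Fin.ext
      obtain ⟨s, hs, hc⟩ := fin_succ_val (t.castSucc : Fin (m'+1))
      rw [hs]
      have h1 := t.isLt
      have h2 : (t.castSucc : Fin (m'+1)).val = t.val := rfl
      have h3 : (t.succ : Fin (m'+1)).val = t.val + 1 := rfl
      omega
    simp only [hcs]
    have hadd : j + 1 + (t.castSucc + 1) = (j + 1 + t.castSucc) + 1 := by ring
    rw [hadd]
    apply hasc
    intro hcon
    have h0 : j + ((1:Fin (m'+1)) + t.castSucc) = j + 0 := by
      rw [add_zero, ← add_assoc]; exact hcon
    have h1 : (1:Fin (m'+1)) + t.castSucc = 0 := add_left_cancel h0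
    have h2 : t.castSucc = -(1 : Fin (m'+1)) := eq_neg_of_add_eq_zero_right h1
    have h3 : (t.castSucc : Fin (m'+1)).val = m' := by rw [h2, Fin.coe_neg_one]
    have h4 := t.isLt
    have h5 : (t.castSucc : Fin (m'+1)).val = t.val := rfl
    omega
  have hid : ∀ t, v (j + 1 + t) = t := by
    intro t
    haveI : WellFoundedLT (Fin (m'+1)) := inferInstance
    haveI : WellFoundedGT (Fin (m'+1)) := inferInstance
    exact le_antisymm (hmono.apply_le (x := t)) (hmono.le_apply (x := t))
  refine ⟨-(j+1), fun i => ?_⟩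
  have h := hid (i - (j+1))
  have harg : j + 1 + (i - (j + 1)) = i := by ring
  rw [harg] at h
  rw [h, sub_eq_add_neg]
end Stage3

section Stage4
variable {m : ℕ}

lemma card_domain_Emap (a b : Fin (m+1)) (k : Fin m) :
    Nat.card {c : Fin (m+1) // (Emap a b k c).isSome} = m := by
  rw [Nat.card_congr (Equiv.subtypeEquivRight (fun c => isSome_Emap_iff a b k c))]
  rw [Nat.card_eq_fintype_card]
  have : Fintype.card {c : Fin (m+1) // ¬ (c = a)} = m := by
    rw [Fintype.card_subtype_compl, Fintype.card_subtype_eq, Fintype.card_fin]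
    omega
  simpa [Ne] using this

lemma good_Emap [NeZero m] (hodd : Odd m) (a b : Fin (m+1)) (k : Fin m)
    (hpar : a.val % 2 = b.val % 2) :
    IsOrientationPreserving (Emap a b k) ∧
    Nat.card {c : Fin (m+1) // (Emap a b k c).isSome} + 1 = m + 1 ∧
    ∃ σ : Equiv.Perm (Fin (m+1)), Equiv.Perm.sign σ = 1 ∧
      ∀ c x : Fin (m+1), Emap a b k c = some x → σ c = x := by
  refine ⟨isOrientationPreserving_Emap a b k, by rw [card_domain_Emap], Pmap a b k, ?_, ?_⟩
  · rw [sign_Pmap hodd]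
    have : Even (a.val + b.val) := by
      rw [Nat.even_add, Nat.even_iff, Nat.even_iff, hpar]
    exact this.neg_one_pow
  · intro c x h
    rcases eq_or_ne c a with rfl | hc
    · simp at h
    · obtain ⟨i, rfl⟩ := Fin.exists_succAbove_eq hc
      rw [Emap_succAbove] at h
      rw [Pmap_succAbove]
      exact Option.some.inj h

end Stage4

section Stage5
variable {m : ℕ}

lemma emap_injective [NeZero m] :
    Function.Injective (fun x : Fin (m+1) × Fin (m+1) × Fin m => Emap x.1 x.2.1 x.2.2) := by
  rintro ⟨a, b, k⟩ ⟨a', b', k'⟩ heq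
  simp only [] at heq
  -- a = a'
  have ha : a = a' := by
    have h1 : ¬ (Emap a b k a).isSome := by simp
    rw [heq, isSome_Emap_iff] at h1
    exact not_not.mp h1
  subst ha
  -- b = b'
  have hvals : ∀ i : Fin m, b.succAbove (i + k) = b'.succAbove (i + k') := by
    intro i
    have h1 : Emap a b k (a.succAbove i) = Emap a b' k' (a.succAbove i) := by rw [heq]
    rw [Emap_succAbove, Emap_succAbove] at h1
    exact Option.some.inj h1
  have hb : b = b' := by
    by_contra hbb
    obtain ⟨t, ht⟩ := Fin.exists_succAbove_eq (Ne.symm hbb)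
    have h2 := hvals (t - k)
    rw [sub_add_cancel] at h2
    rw [ht] at h2
    exact Fin.succAbove_ne b' _ h2.symm
  subst hb
  have hk : k = k' := by
    have h2 := hvals 0
    have h3 := Fin.succAbove_right_injective (p := b) h2
    simpa using h3
  rw [hk]

lemma emap_surjective [NeZero m] (hodd : Odd m)
    (α : Fin (m+1) → Option (Fin (m+1)))
    (hOP : IsOrientationPreserving α)
    (hcard : Nat.card {c : Fin (m+1) // (α c).isSome} + 1 = m + 1)
    (σ : Equiv.Perm (Fin (m+1))) (hsign : Equiv.Perm.sign σ = 1)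
    (hext : ∀ c x : Fin (m+1), α c = some x → σ c = x) :
    ∃ a b : Fin (m+1), ∃ k : Fin m, a.val % 2 = b.val % 2 ∧ α = Emap a b k := by
  -- find the unique hole a
  have hc1 : Fintype.card {c : Fin (m+1) // ¬ (α c).isSome} = 1 := by
    have h0 : Nat.card {c : Fin (m+1) // (α c).isSome} = m := by omega
    rw [Nat.card_eq_fintype_card] at h0
    rw [Fintype.card_subtype_compl, h0, Fintype.card_fin]
    omega
  obtain ⟨⟨a, ha⟩, huniq⟩ := Fintype.card_eq_one_iff.mp hc1
  have hdom : ∀ c, (α c).isSome ↔ c ≠ a := by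
    intro c
    constructor
    · rintro h rfl; exact ha h
    · intro h
      by_contra hns
      have := huniq ⟨c, hns⟩
      exact h (congrArg Subtype.val this)
  set b := σ a with hbdef
  have hv : ∀ i : Fin m, ∃ w : Fin m, b.succAbove w = σ (a.succAbove i) := by
    intro i
    exact Fin.exists_succAbove_eq (σ.injective.ne (Fin.succAbove_ne a i))
  choose v hvs using hv
  have hval : ∀ i : Fin m, α (a.succAbove i) = some (b.succAbove (v i)) := by
    intro i
    obtain ⟨x, hx⟩ := Option.isSome_iff_exists.mp ((hdom _).mpr (Fin.succAbove_ne a i))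
    rw [hx, hvs, hext _ x hx]
  have hinj : Function.Injective v := by
    intro i i' h
    have h1 : σ (a.succAbove i) = σ (a.succAbove i') := by rw [← hvs, ← hvs, h]
    exact Fin.succAbove_right_injective (σ.injective h1)
  obtain ⟨k, hk⟩ := eq_add_of_descents v hinj (descent_unique α hOP a b v hdom hval)
  refine ⟨a, b, k, ?_, ?_⟩
  · -- parity from the sign
    have hσ : σ = Pmap a b k := by
      apply Equiv.ext
      intro c
      rcases eq_or_ne c a with rfl | hc
      · rw [Pmap_at]
      · obtain ⟨i, rfl⟩ := Fin.exists_succAbove_eq hc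
        rw [Pmap_succAbove, ← hk i, hvs]
    rw [hσ, sign_Pmap hodd] at hsign
    have heven : Even (a.val + b.val) := by
      by_contra hodd'
      rw [(Nat.not_even_iff_odd.mp hodd').neg_one_pow] at hsign
      exact (by decide : ((-1 : ℤˣ)) ≠ 1) hsign
    rw [Nat.even_add, Nat.even_iff, Nat.even_iff] at heven
    omega
  · funext c
    rcases eq_or_ne c a with rfl | hc
    · rw [Emap_at]
      exact Option.not_isSome_iff_eq_none.mp ha
    · obtain ⟨i, rfl⟩ := Fin.exists_succAbove_eq hc
      rw [Emap_succAbove, hval, hk]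

lemma main_count (hodd : Odd m) :
    Nat.card {α : Fin (m+1) → Option (Fin (m+1)) //
        IsOrientationPreserving α ∧
        Nat.card {a : Fin (m+1) // (α a).isSome} + 1 = m + 1 ∧
        ∃ σ : Equiv.Perm (Fin (m+1)), Equiv.Perm.sign σ = 1 ∧
          ∀ a b : Fin (m+1), α a = some b → σ a = b}
      = Nat.card {x : Fin (m+1) × Fin (m+1) × Fin m // x.1.val % 2 = x.2.1.val % 2} := by
  haveI : NeZero m := ⟨by rcases hodd with ⟨t, ht⟩; omega⟩
  refine (Nat.card_eq_of_bijective
    (fun x : {x : Fin (m+1) × Fin (m+1) × Fin m // x.1.val % 2 = x.2.1.val % 2} =>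
      (⟨Emap x.1.1 x.1.2.1 x.1.2.2, good_Emap hodd x.1.1 x.1.2.1 x.1.2.2 x.2⟩ :
        {α : Fin (m+1) → Option (Fin (m+1)) //
          IsOrientationPreserving α ∧
          Nat.card {a : Fin (m+1) // (α a).isSome} + 1 = m + 1 ∧
          ∃ σ : Equiv.Perm (Fin (m+1)), Equiv.Perm.sign σ = 1 ∧
            ∀ a b : Fin (m+1), α a = some b → σ a = b})) ⟨?_, ?_⟩).symm
  · rintro x y hxy
    apply Subtype.ext
    exact emap_injective (congrArg Subtype.val hxy)
  · rintro ⟨α, hOP, hcard, σ, hsign, hext⟩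
    obtain ⟨a, b, k, hpar, hα⟩ := emap_surjective hodd α hOP hcard σ hsign hext
    exact ⟨⟨(a, b, k), hpar⟩, Subtype.ext hα.symm⟩

lemma card_T (hev : (m+1) % 2 = 0) :
    Nat.card {x : Fin (m+1) × Fin (m+1) × Fin m // x.1.val % 2 = x.2.1.val % 2}
      = (m+1) * ((m+1)/2) * m := by
  have e : (Fin (m+1) × Fin ((m+1)/2) × Fin m) ≃
      {x : Fin (m+1) × Fin (m+1) × Fin m // x.1.val % 2 = x.2.1.val % 2} :=
    { toFun := fun y => ⟨(y.1, ⟨2 * y.2.1.val + y.1.val % 2, by omega⟩, y.2.2), by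
        simp only []
        omega⟩
      invFun := fun x => (x.1.1, ⟨x.1.2.1.val / 2, by omega⟩, x.1.2.2)
      left_inv := by
        rintro ⟨a, j, k⟩
        simp only []
        refine Prod.ext rfl (Prod.ext (Fin.ext ?_) rfl)
        simp only []
        omega
      right_inv := by
        rintro ⟨⟨a, b, k⟩, h⟩
        apply Subtype.ext
        simp only [] at h ⊢
        refine Prod.ext rfl (Prod.ext (Fin.ext ?_) rfl)
        simp only []
        omega }
  rw [← Nat.card_congr e]
  simp [Nat.card_eq_fintype_card]
  ring

end Stage5




end OPAux

/-- For n even, the number of orientation-preserving partial permutations of Fin n with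
domain of size n-1 whose completion is an even permutation equals n²(n-1)/2. -/
theorem card_rank_sub_one_even_completion (n : ℕ) (hne : Even n) :
    (Nat.card {α : Fin n → Option (Fin n) //
        IsOrientationPreserving α ∧
        Nat.card {a : Fin n // (α a).isSome} + 1 = n ∧
        ∃ σ : Equiv.Perm (Fin n), Equiv.Perm.sign σ = 1 ∧
          ∀ a b : Fin n, α a = some b → σ a = b} : ℚ)
      = (n : ℚ) ^ 2 * ((n : ℚ) - 1) / 2 := by
  rcases n with _ | m
  · haveI : IsEmpty {α : Fin 0 → Option (Fin 0) //
        IsOrientationPreserving α ∧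
        Nat.card {a : Fin 0 // (α a).isSome} + 1 = 0 ∧
        ∃ σ : Equiv.Perm (Fin 0), Equiv.Perm.sign σ = 1 ∧
          ∀ a b : Fin 0, α a = some b → σ a = b} :=
      ⟨fun x => by have := x.2.2.1; omega⟩
    rw [Nat.card_of_isEmpty]
    norm_num
  · have hm1 : (m+1) % 2 = 0 := Nat.even_iff.mp hne
    have hodd : Odd m := by rw [Nat.odd_iff]; omega
    rw [OPAux.main_count hodd, OPAux.card_T hm1]
    have h2 : ((m+1)/2 : ℕ) * 2 = m + 1 := by omega
    have h3 : ((m+1) * ((m+1)/2) * m) * 2 = (m+1) * ((m+1) * m) := by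
      calc (m+1) * ((m+1)/2) * m * 2 = ((m+1)/2 * 2) * ((m+1) * m) := by ring
        _ = (m+1) * ((m+1)*m) := by rw [h2]
    have h4 : (((m+1) * ((m+1)/2) * m : ℕ) : ℚ) * 2 = ((m:ℚ)+1) * (((m:ℚ)+1) * m) := by
      exact_mod_cast congrArg (fun t : ℕ => (t : ℚ)) h3
    rw [eq_div_iff (two_ne_zero), h4]
    push_cast
    ring
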